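/- Let o be a vertex with dist(s,o) = 1. Then for every iteration k with 1 ≤ k ≤ 1+δ, the truncated Bellman–Ford iterate y⁽ᵏ⁾(o) aggregates all walk representations of length up to k: ∑_{ℓ=1}^{k} ∑_{p ∈ P_ℓ(s,o)} weight(p) ≤ y⁽ᵏ⁾(o) in the canonical order of R (i.e., there exists c ∈ R with y⁽ᵏ⁾(o) equal to this sum plus c). -/

import Mathlib

open Finset

/-- The weight of a walk: the product of the edge weights `wt v_{i-1} v_i` along the
walk, with the length-0 walk having weight 1. -/
def SimpleGraph.Walk.weight {V : Type*} {G : SimpleGraph V} {R : Type*} [CommSemiring R]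
    (wt : V → V → R) {u v : V} (p : G.Walk u v) : R :=
  (p.darts.map fun d => wt d.fst d.snd).prod

/-- `pathSum G wt t s o = ∑_{p ∈ P_t(s,o)} weight(p)`, the sum of the weights of all
walks of length `t` from `s` to `o` in `G`. -/
def pathSum {V : Type*} [Fintype V] [DecidableEq V] (G : SimpleGraph V) [DecidableRel G.Adj]
    {R : Type*} [CommSemiring R] (wt : V → V → R) (t : ℕ) (s o : V) : R :=
  ∑ p ∈ G.finsetWalkLength t s o, p.weight wt

open Classical in
/-- The truncated Bellman–Ford iterates `y_δ⁽ᵗ⁾` with source `s` and offset `δ`: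
`y⁽⁰⁾(o) = 1` if `o = s` and `0` otherwise; for `t ≥ 1`, if `o` is reachable from `s`
and `dist(s,o) ≤ t ≤ dist(s,o) + δ` then `o` aggregates, over the constrained edge set
(neighbors `u` reachable from `s` with `dist(s,u) < dist(s,o) + δ`), the messages
`y⁽ᵗ⁻¹⁾(u) * wt u o`, plus `y⁽⁰⁾(o)`; otherwise `y⁽ᵗ⁾(o) = y⁽ᵗ⁻¹⁾(o)`. -/
noncomputable def truncBF {V : Type*} [Fintype V] (G : SimpleGraph V)
    {R : Type*} [CommSemiring R] (wt : V → V → R) (s : V) (δ : ℕ) : ℕ → V → R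
  | 0 => fun o => if o = s then 1 else 0
  | (t + 1) => fun o =>
      if G.Reachable s o ∧ G.dist s o ≤ t + 1 ∧ t + 1 ≤ G.dist s o + δ then
        (∑ u ∈ Finset.univ.filter
            (fun u => G.Adj u o ∧ G.Reachable s u ∧ G.dist s u < G.dist s o + δ),
          truncBF G wt s δ t u * wt u o) + (if o = s then 1 else 0)
      else truncBF G wt s δ t o

section Aux
variable {V : Type*} [Fintype V] [DecidableEq V] (G : SimpleGraph V) [DecidableRel G.Adj]
  {R : Type*} [CommSemiring R] (wt : V → V → R)

lemma weight_cons {u v w : V} (h : G.Adj u v) (p : G.Walk v w) :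
    (SimpleGraph.Walk.cons h p).weight wt = wt u v * p.weight wt := by
  simp [SimpleGraph.Walk.weight, SimpleGraph.Walk.darts_cons]

lemma weight_reverse {u v : V} (p : G.Walk u v) :
    p.reverse.weight wt = p.weight (fun a b => wt b a) := by
  simp only [SimpleGraph.Walk.weight, SimpleGraph.Walk.darts_reverse, List.map_reverse,
    List.prod_reverse, List.map_map]
  congr 1

lemma pathSum_zero (s o : V) : pathSum G wt 0 s o = if s = o then 1 else 0 := by
  by_cases h : s = o
  · subst h
    simp [pathSum, SimpleGraph.finsetWalkLength, SimpleGraph.Walk.weight]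
  · simp [pathSum, SimpleGraph.finsetWalkLength, h]

lemma pathSum_reverse (t : ℕ) (u v : V) :
    pathSum G wt t u v = pathSum G (fun a b => wt b a) t v u := by
  unfold pathSum
  apply Finset.sum_nbij' (fun p => p.reverse) (fun p => p.reverse)
  · intro p hp
    simp_all [SimpleGraph.mem_finsetWalkLength_iff]
  · intro p hp
    simp_all [SimpleGraph.mem_finsetWalkLength_iff]
  · intro p _; simp
  · intro p _; simp
  · intro p _; rw [weight_reverse]

lemma pathSum_succ_left (t : ℕ) (u v : V) :
    pathSum G wt (t+1) u v
      = ∑ w ∈ univ.filter (fun w => G.Adj u w), wt u w * pathSum G wt t w v := by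
  unfold pathSum
  rw [show G.finsetWalkLength (t+1) u v =
    Finset.univ.biUnion fun (w : G.neighborSet u) =>
      (G.finsetWalkLength t w v).map ⟨fun p => SimpleGraph.Walk.cons w.property p,
        fun _ _ h => by injection h⟩ from rfl]
  rw [Finset.sum_biUnion (fun x _ y _ hxy => by
    simp only [Function.onFun, Finset.disjoint_left, Finset.mem_map,
      Function.Embedding.coeFn_mk, forall_exists_index]
    rintro p q ⟨-, rfl⟩ ⟨q', -, hq'⟩
    exact hxy (Subtype.ext (by injection hq'.symm)))]
  calc ∑ x : ↑(G.neighborSet u), ∑ p ∈ (G.finsetWalkLength t x v).map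
        ⟨fun p => SimpleGraph.Walk.cons x.property p, fun _ _ h => by injection h⟩,
          p.weight wt
      = ∑ x : ↑(G.neighborSet u), wt u x *
          ∑ p ∈ G.finsetWalkLength t x v, p.weight wt := by
        refine Finset.sum_congr rfl fun x _ => ?_
        rw [Finset.sum_map, Finset.mul_sum]
        exact Finset.sum_congr rfl fun p _ => weight_cons G wt x.property p
    _ = ∑ w ∈ univ.filter (fun w => G.Adj u w), wt u w *
          ∑ p ∈ G.finsetWalkLength t w v, p.weight wt := by
        refine Finset.sum_bij' (fun (x : ↑(G.neighborSet u)) _ => (x : V))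
          (fun w hw => (⟨w, (Finset.mem_filter.mp hw).2⟩ : ↑(G.neighborSet u)))
          ?_ ?_ ?_ ?_ ?_
        · intro x _; simp only [Finset.mem_filter, Finset.mem_univ, true_and]; exact x.property
        · intro w hw; exact Finset.mem_univ _
        · intro x _; rfl
        · intro w hw; rfl
        · intro x _; rfl



lemma pathSum_succ_right (t : ℕ) (s o : V) :
    pathSum G wt (t+1) s o
      = ∑ u ∈ univ.filter (fun u => G.Adj u o), pathSum G wt t s u * wt u o := by
  rw [pathSum_reverse, pathSum_succ_left]
  refine Finset.sum_congr (by simp [SimpleGraph.adj_comm]) fun u hu => ?_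
  rw [pathSum_reverse G wt t s u, mul_comm]

lemma pathSum_eq_zero_of_not_reachable {s u : V} (h : ¬ G.Reachable s u) (t : ℕ) :
    pathSum G wt t s u = 0 :=
  Finset.sum_eq_zero fun p _ => absurd p.reachable h

lemma pathSum_eq_zero_of_lt_dist {s u : V} {t : ℕ} (h : t < G.dist s u) :
    pathSum G wt t s u = 0 :=
  Finset.sum_eq_zero fun p hp => absurd
    ((SimpleGraph.mem_finsetWalkLength_iff.mp hp) ▸ SimpleGraph.dist_le p) (not_le.mpr h)

lemma dist_le_adj_dist {s u v : V} (h : G.Reachable s v) (ha : G.Adj v u) :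
    G.dist s u ≤ G.dist s v + 1 := by
  obtain ⟨p, hp⟩ := h.exists_walk_length_eq_dist
  calc G.dist s u ≤ (p.concat ha).length := SimpleGraph.dist_le _
    _ = G.dist s v + 1 := by rw [SimpleGraph.Walk.length_concat, hp]


end Aux

section Main
variable {V : Type*} [Fintype V] [DecidableEq V] (G : SimpleGraph V) [DecidableRel G.Adj]
  {R : Type*} [CommSemiring R] [PartialOrder R]
  [IsOrderedRing R] [CanonicallyOrderedAdd R] [NoZeroDivisors R] (wt : V → V → R) (s : V) (δ : ℕ)

lemma sum_le_sum_mem {α M : Type*} [AddCommMonoid M] [PartialOrder M] [IsOrderedAddMonoid M] {s t : Finset α}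
    {f g : α → M} (hst : s = t) (h : ∀ v ∈ s, f v ≤ g v) :
    ∑ v ∈ s, f v ≤ ∑ v ∈ t, g v := hst ▸ Finset.sum_le_sum h

lemma truncBF_key : ∀ (t : ℕ) (u : V), G.Reachable s u → t ≤ G.dist s u + δ →
    ∑ ℓ ∈ Finset.range (t+1), pathSum G wt ℓ s u ≤ truncBF G wt s δ t u := by
  intro t
  induction t with
  | zero =>
    intro u _ _
    simp only [zero_add, Finset.range_one, Finset.sum_singleton, truncBF]
    rw [pathSum_zero]
    by_cases h : s = u
    · subst h; simp
    · simp [h, Ne.symm h]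
  | succ t ih =>
    intro u hr hle
    by_cases hd : G.dist s u ≤ t + 1
    · rw [show truncBF G wt s δ (t+1) u = _ from if_pos ⟨hr, hd, hle⟩]
      rw [Finset.sum_range_succ', pathSum_zero]
      have hstep : ∀ ℓ, pathSum G wt (ℓ+1) s u
          = ∑ v ∈ univ.filter (fun v => G.Adj v u), pathSum G wt ℓ s v * wt v u :=
        fun ℓ => pathSum_succ_right G wt ℓ s u
      simp only [hstep]
      rw [Finset.sum_comm]
      have hrw : ∀ v ∈ univ.filter (fun v => G.Adj v u),
          ∑ ℓ ∈ Finset.range (t+1), pathSum G wt ℓ s v * wt v u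
            = (∑ ℓ ∈ Finset.range (t+1), pathSum G wt ℓ s v) * wt v u :=
        fun v _ => (Finset.sum_mul _ _ _).symm
      rw [Finset.sum_congr rfl hrw]
      have hsub : univ.filter
            (fun v => G.Adj v u ∧ G.Reachable s v ∧ G.dist s v < G.dist s u + δ)
          ⊆ univ.filter (fun v => G.Adj v u) := by
        intro v hv
        simp only [Finset.mem_filter] at hv ⊢
        exact ⟨hv.1, hv.2.1⟩
      rw [← Finset.sum_subset hsub]
      · refine add_le_add ?_ (le_of_eq (by simp [eq_comm]))
        refine sum_le_sum_mem (by ext v; simp) ?_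
        intro v hv
        simp only [Finset.mem_filter] at hv
        obtain ⟨-, hadj, hrv, hdv⟩ := hv
        have ht : t ≤ G.dist s v + δ := by
          have := dist_le_adj_dist G hrv hadj
          omega
        exact mul_le_mul_left (ih v hrv ht) _
      · intro v hv hnv
        simp only [Finset.mem_filter, Finset.mem_univ, true_and, not_and] at hv hnv
        rw [Finset.sum_eq_zero, zero_mul]
        intro ℓ hℓ
        by_cases hrv : G.Reachable s v
        · refine pathSum_eq_zero_of_lt_dist G wt ?_
          have := hnv hv hrv
          simp only [Finset.mem_range] at hℓ
          omega
        · exact pathSum_eq_zero_of_not_reachable G wt hrv ℓ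
    · rw [show truncBF G wt s δ (t+1) u = truncBF G wt s δ t u from
        if_neg (by tauto)]
      rw [Finset.sum_range_succ, pathSum_eq_zero_of_lt_dist G wt (by omega), add_zero]
      exact ih u hr (by omega)


end Main

/-- Let `o` be a vertex with `dist(s,o) = 1`. Then for every iteration
`k` with `1 ≤ k ≤ 1 + δ`, the truncated Bellman–Ford iterate `y⁽ᵏ⁾(o)` aggregates all
walk representations of length up to `k`:
`∑_{ℓ=1}^{k} ∑_{p ∈ P_ℓ(s,o)} weight(p) ≤ y⁽ᵏ⁾(o)` in the canonical order of `R`. -/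
theorem truncBF_one_hop_iterate_ge_pathSum {V : Type*} [Fintype V] [DecidableEq V]
    (G : SimpleGraph V) [DecidableRel G.Adj] {R : Type*} [CommSemiring R] [PartialOrder R]
    [IsOrderedRing R] [CanonicallyOrderedAdd R] [NoZeroDivisors R]
    (wt : V → V → R) (s : V) (δ : ℕ) (o : V) (hdist : G.dist s o = 1)
    (k : ℕ) (hk₁ : 1 ≤ k) (hk₂ : k ≤ 1 + δ) :
    ∑ ℓ ∈ Finset.Icc 1 k, pathSum G wt ℓ s o ≤ truncBF G wt s δ k o := by
  have hr : G.Reachable s o := SimpleGraph.Reachable.of_dist_ne_zero (by omega)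
  have h := truncBF_key G wt s δ k o hr (by omega)
  have hso : s ≠ o := by
    intro h'; rw [h', SimpleGraph.dist_self] at hdist; omega
  have : ∑ ℓ ∈ Finset.range (k+1), pathSum G wt ℓ s o
      = ∑ ℓ ∈ Finset.Icc 1 k, pathSum G wt ℓ s o := by
    rw [Finset.range_eq_Ico, show (0:ℕ) = 1 - 1 from rfl]
    rw [← Finset.Ico_add_one_right_eq_Icc] at *
    rw [Finset.sum_eq_sum_Ico_succ_bot (by omega), pathSum_zero, if_neg hso, zero_add]
  rwa [this] at h
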